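/- Let Γ be a finitely generated group with symmetric generating set S, and suppose there is a sequence of unitary representations (πₙ) of Γ (e.g., on ℓ²(Γ/Γₙ)) such that for every c > 0 some πₙ has a unit vector ξ with ‖πₙ(s)ξ − ξ‖² small enough that ⟨πₙ(Δ_Γ)ξ, ξ⟩ < c while ξ is orthogonal to the invariant vectors. Then the spectrum of the image of Δ_Γ in the C*-algebra completion of ℂ[Γ] with respect to the supremum of the norms over all representations πₙ is not contained in {0} ∪ [c, 2] for any c > 0. Consequently, if Γ fails property (T), witnessed by almost-invariant unit vectors orthogonal to invariant vectors in the representations ℓ²(Γ/Γₙ), then the space of graphs X = ⊔ Γ/Γₙ does not have geometric property (T). -/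

import Mathlib

/-- Failure of property (T) obstructs geometric property (T).
`Δ` is the Laplacian in the maximal completion (a C*-algebra `A`), `T n = πₙ(Δ_Γ)` are
its images in a family of unitary representations; since the maximal norm dominates each
representation norm, `spec(T n) ⊆ spec(Δ)`.  Each `T n` is a positive self-adjoint
operator.  If for every `c > 0` some representation admits a unit vector `ξ`, orthogonal
to the invariant vectors (the kernel of `T n`), with `⟨T n ξ, ξ⟩ < c`, then for no
`c > 0` is `spec(Δ)` contained in `{0} ∪ [c, 2]`: geometric property (T) fails. -/
theorem stmt17 {A : Type*} [CStarAlgebra A] (Δ : A)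
    {H : ℕ → Type*} [∀ n, NormedAddCommGroup (H n)]
    [∀ n, InnerProductSpace ℂ (H n)] [∀ n, CompleteSpace (H n)]
    (T : ∀ n, H n →L[ℂ] H n)
    (hsa : ∀ n, IsSelfAdjoint (T n))
    (hpos : ∀ (n : ℕ) (ξ : H n), 0 ≤ (inner ℂ (T n ξ) ξ : ℂ).re)
    (hspec : ∀ n, spectrum ℂ (T n) ⊆ spectrum ℂ Δ)
    (halm : ∀ c > (0 : ℝ), ∃ (n : ℕ) (ξ : H n), ‖ξ‖ = 1 ∧
      (∀ η : H n, T n η = 0 → (inner ℂ η ξ : ℂ) = 0) ∧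
      (inner ℂ (T n ξ) ξ : ℂ).re < c) :
    ∀ c > (0 : ℝ), ¬ (spectrum ℂ Δ ⊆
      insert (0 : ℂ) {z : ℂ | z.im = 0 ∧ c ≤ z.re ∧ z.re ≤ 2}) := by
  intro c hc hsub
  obtain ⟨n, ξ, hξ, horth, hlt⟩ := halm c hc
  set a := T n with ha_def
  have hsaa : IsSelfAdjoint a := hsa n
  -- real spectrum characterization
  have hspecR : ∀ x ∈ spectrum ℝ a, x = 0 ∨ (c ≤ x ∧ x ≤ 2) := by
    intro x hx
    have hxC : (algebraMap ℝ ℂ x) ∈ spectrum ℂ a := spectrum.algebraMap_mem ℂ hx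
    have := hsub (hspec n hxC)
    simp only [Set.mem_insert_iff, Set.mem_setOf_eq] at this
    rcases this with h0 | ⟨_, h1, h2⟩
    · left
      have : (x : ℂ) = 0 := h0
      exact_mod_cast this
    · right
      constructor
      · simpa using h1
      · simpa using h2
  -- the spectral projection function
  set f : ℝ → ℝ := fun x => min (max x 0 / c) 1 with hf_def
  have hfc : Continuous f := by fun_prop
  have hf_spec : ∀ x ∈ spectrum ℝ a, x * f x = x ∧ c * f x ≤ x := by
    intro x hx
    rcases hspecR x hx with h0 | ⟨h1, _⟩
    · simp [h0, hf_def, hc.le]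
    · have hx0 : 0 ≤ x := le_trans hc.le h1
      have : f x = 1 := by
        simp only [hf_def, max_eq_left hx0]
        rw [min_eq_right]
        rw [le_div_iff₀ hc]
        simpa using h1
      simp [this]
      linarith
  set P : H n →L[ℂ] H n := cfc f a with hP_def
  have h1 : a * P = a := by
    calc a * P = cfc (fun x : ℝ => x) a * cfc f a := by rw [cfc_id' ℝ a]
      _ = cfc (fun x : ℝ => x * f x) a := (cfc_mul _ _ a continuous_id.continuousOn hfc.continuousOn).symm
      _ = cfc (fun x : ℝ => x) a := cfc_congr (fun x hx => (hf_spec x hx).1)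
      _ = a := cfc_id' ℝ a
  have h2 : (0 : H n →L[ℂ] H n) ≤ a - c • P := by
    have : a - c • P = cfc (fun x : ℝ => x - c * f x) a := by
      rw [cfc_sub (fun x : ℝ => x) (fun x => c * f x) a continuous_id.continuousOn ((continuous_const.mul hfc).continuousOn), cfc_const_mul _ _ a hfc.continuousOn, cfc_id' ℝ a]
    rw [this]
    exact cfc_nonneg (fun x hx => by linarith [(hf_spec x hx).2])
  -- orthogonality: inner (P ξ) ξ = 1
  have hker : a (ξ - P ξ) = 0 := by
    have := congrArg (fun b : H n →L[ℂ] H n => b ξ) h1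
    simp only [ContinuousLinearMap.mul_apply] at this
    simp [map_sub, this]
  have hPinner : (inner ℂ (P ξ) ξ : ℂ) = 1 := by
    have h0 := horth (ξ - P ξ) hker
    rw [inner_sub_left] at h0
    have hξξ : (inner ℂ ξ ξ : ℂ) = 1 := by
      rw [inner_self_eq_norm_sq_to_K, hξ]; norm_num
    rw [hξξ] at h0
    linear_combination -h0
  -- positivity gives c ≤ ⟨a ξ, ξ⟩
  have h3 := ((a - c • P).nonneg_iff_isPositive).mp (by simpa using h2)
  have h4 := h3.2 ξ
  rw [ContinuousLinearMap.reApplyInnerSelf] at h4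
  simp only [ContinuousLinearMap.sub_apply, ContinuousLinearMap.smul_apply,
    inner_sub_left] at h4
  rw [RCLike.real_smul_eq_coe_smul (K := ℂ), inner_smul_left, hPinner] at h4
  simp only [map_sub, mul_one] at h4
  have h5 : c ≤ (inner ℂ (a ξ) ξ : ℂ).re := by
    simpa [Complex.conj_ofReal, RCLike.re_to_complex] using h4
  linarith
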